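/- Let m ≥ 1, a = (a_1,…,a_m) ∈ ℝ^m, and λ ∈ (0, 2). The partition problem for a is solvable if and only if there exist u, v ∈ ℝ^m with (Σ_{i=1}^m a_i(u_i − v_i))^2 + Σ_{i=1}^m (u_i + v_i − 1)^2 + λ·(Σ_{i=1}^m (|u_i| + |v_i|) − √(Σ_{i=1}^m (u_i^2 + v_i^2))) = g*(λ) (equivalently, the infimum of this objective over ℝ^m × ℝ^m equals g*(λ)). -/

import Mathlib

set_option maxHeartbeats 1000000

theorem expand_sum_aux (m : ℕ) (f : Fin m → ℝ) (c : ℝ) :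
    ∑ i, (f i - c)^2 = ∑ i, (f i)^2 - 2*c*(∑ i, f i) + m * c^2 := by
  have h : ∀ i ∈ Finset.univ, (f i - c)^2 = (f i)^2 - 2*c* f i + c^2 := fun i _ => by ring
  rw [Finset.sum_congr rfl h, Finset.sum_add_distrib, Finset.sum_sub_distrib,
    ← Finset.mul_sum, Finset.sum_const, Finset.card_univ, Fintype.card_fin, nsmul_eq_mul]

theorem partition_iff_UP_value (m : ℕ) (hm : 1 ≤ m) (a : Fin m → ℝ)
    (lam : ℝ) (hlam0 : 0 < lam) (hlam2 : lam < 2)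
    (gstar : ℝ)
    (hgstar : gstar = lam * ((1 - lam / 4) * m + (lam / 2 - 1) * Real.sqrt m - lam / 4)) :
    (∃ ε : Fin m → ℝ, (∀ i, ε i = 1 ∨ ε i = -1) ∧ ∑ i, ε i * a i = 0) ↔
    (∃ u v : Fin m → ℝ,
      (∑ i, a i * (u i - v i)) ^ 2 + (∑ i, (u i + v i - 1) ^ 2)
        + lam * ((∑ i, (|u i| + |v i|)) - Real.sqrt (∑ i, (u i ^ 2 + v i ^ 2)))
        = gstar) := by
  have hm1 : (1:ℝ) ≤ (m:ℝ) := by exact_mod_cast hm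
  set sm := Real.sqrt m with hsm_def
  have hsm1 : 1 ≤ sm := by
    rw [hsm_def, show (1:ℝ) = Real.sqrt 1 by simp]
    exact Real.sqrt_le_sqrt hm1
  have hsm0 : 0 < sm := lt_of_lt_of_le one_pos hsm1
  have hsm2 : sm^2 = (m:ℝ) := Real.sq_sqrt (by positivity)
  set t0 : ℝ := 1 - lam/2 + lam/(2*sm) with ht0_def
  have ht0pos : 0 < t0 := by
    have h1 : 0 < lam/(2*sm) := by positivity
    rw [ht0_def]; nlinarith
  have ht0le1 : t0 ≤ 1 := by
    have h1 : lam/(2*sm) ≤ lam/2 := by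
      apply div_le_div_of_nonneg_left hlam0.le (by norm_num) ?_
      nlinarith
    rw [ht0_def]; nlinarith
  have ht0ne : (1 - lam/2 + lam/(2*sm)) ≠ 0 := by rw [← ht0_def]; exact ht0pos.ne'
  have hg : gstar = m * (1 - t0^2) := by
    rw [hgstar, ht0_def, ← hsm2]
    field_simp
    ring
  constructor
  · rintro ⟨ε, hε, hsum⟩
    refine ⟨fun i => if ε i = 1 then t0 else 0, fun i => if ε i = 1 then 0 else t0, ?_⟩
    have h1 : ∑ i, a i * ((if ε i = 1 then t0 else 0) - (if ε i = 1 then 0 else t0))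
        = t0 * ∑ i, ε i * a i := by
      rw [Finset.mul_sum]
      refine Finset.sum_congr rfl fun i _ => ?_
      rcases hε i with h | h
      · rw [if_pos h, if_pos h, h]; ring
      · rw [if_neg (by rw [h]; norm_num), if_neg (by rw [h]; norm_num), h]; ring
    have h2 : ∑ i, ((if ε i = 1 then t0 else 0) + (if ε i = 1 then 0 else t0) - 1)^2
        = m * (t0 - 1)^2 := by
      rw [Finset.sum_congr rfl fun i _ => ?_, Finset.sum_const, Finset.card_univ,
        Fintype.card_fin, nsmul_eq_mul]
      rcases hε i with h | h
      · rw [if_pos h, if_pos h]; ring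
      · rw [if_neg (by rw [h]; norm_num), if_neg (by rw [h]; norm_num)]; ring
    have h3 : ∑ i, (|if ε i = 1 then t0 else 0| + |if ε i = 1 then 0 else t0|)
        = m * t0 := by
      rw [Finset.sum_congr rfl fun i _ => ?_, Finset.sum_const, Finset.card_univ,
        Fintype.card_fin, nsmul_eq_mul]
      rcases hε i with h | h
      · rw [if_pos h, if_pos h, abs_of_nonneg ht0pos.le, abs_zero]; ring
      · rw [if_neg (by rw [h]; norm_num), if_neg (by rw [h]; norm_num),
          abs_of_nonneg ht0pos.le, abs_zero]; ring
    have h4 : ∑ i, ((if ε i = 1 then t0 else 0)^2 + (if ε i = 1 then 0 else t0)^2)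
        = m * t0^2 := by
      rw [Finset.sum_congr rfl fun i _ => ?_, Finset.sum_const, Finset.card_univ,
        Fintype.card_fin, nsmul_eq_mul]
      rcases hε i with h | h
      · rw [if_pos h, if_pos h]; ring
      · rw [if_neg (by rw [h]; norm_num), if_neg (by rw [h]; norm_num)]; ring
    rw [h1, h2, h3, h4, hsum, Real.sqrt_mul (by positivity), Real.sqrt_sq ht0pos.le,
      ← hsm_def, hg]
    rw [ht0_def, ← hsm2]
    field_simp
    ring
  · rintro ⟨u, v, heq⟩
    classical
    set p : Fin m → ℝ := fun i => |u i| + |v i| with hp_def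
    set q : Fin m → ℝ := fun i => min (p i) 1 with hq_def
    have hp_eq : ∀ i, p i = |u i| + |v i| := fun i => rfl
    have hq_eq : ∀ i, q i = min (p i) 1 := fun i => rfl
    have hp0 : ∀ i, 0 ≤ p i := fun i => by rw [hp_eq]; positivity
    have hq0 : ∀ i, 0 ≤ q i := fun i => le_min (hp0 i) zero_le_one
    have hqp : ∀ i, q i ≤ p i := fun i => min_le_left _ _
    set N := Real.sqrt (∑ i, (u i ^ 2 + v i ^ 2)) with hN_def
    set Np := Real.sqrt (∑ i, p i ^ 2) with hNp_def
    set Nq := Real.sqrt (∑ i, q i ^ 2) with hNq_def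
    have hNq0 : 0 ≤ Nq := Real.sqrt_nonneg _
    have hNq2 : Nq^2 = ∑ i, q i^2 := Real.sq_sqrt (Finset.sum_nonneg fun i _ => sq_nonneg _)
    have hNp2 : Np^2 = ∑ i, p i^2 := Real.sq_sqrt (Finset.sum_nonneg fun i _ => sq_nonneg _)
    -- (I1)  N ≤ Np
    have hpw1 : ∀ i ∈ Finset.univ, u i ^2 + v i ^2 ≤ p i ^2 := by
      intro i _
      have h1 : 0 ≤ |u i| * |v i| := mul_nonneg (abs_nonneg _) (abs_nonneg _)
      have h2 : |u i|^2 = u i ^2 := sq_abs _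
      have h3 : |v i|^2 = v i ^2 := sq_abs _
      rw [hp_eq]; nlinarith
    have hNNp : N ≤ Np := Real.sqrt_le_sqrt (Finset.sum_le_sum hpw1)
    -- q i ≤ Nq
    have hqNq : ∀ i, q i ≤ Nq := by
      intro i
      have h1 : q i^2 ≤ ∑ j, q j^2 :=
        Finset.single_le_sum (fun j _ => sq_nonneg (q j)) (Finset.mem_univ i)
      calc q i = Real.sqrt (q i^2) := (Real.sqrt_sq (hq0 i)).symm
      _ ≤ Nq := Real.sqrt_le_sqrt h1
    -- (I2)
    have hD0 : 0 ≤ ∑ i, p i - ∑ i, q i := by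
      rw [sub_nonneg]; exact Finset.sum_le_sum fun i _ => hqp i
    have hNpNq : Np ≤ Nq + (∑ i, p i - ∑ i, q i) := by
      set D := ∑ i, p i - ∑ i, q i with hD_def
      have hdle : ∀ i, p i - q i ≤ D := by
        intro i
        have h1 : ∑ j, (p j - q j) = D := by rw [hD_def, Finset.sum_sub_distrib]
        rw [← h1]
        exact Finset.single_le_sum (fun j _ => sub_nonneg.2 (hqp j)) (Finset.mem_univ i)
      have key : ∑ i, p i^2 ≤ (Nq + D)^2 := by
        have pointwise : ∀ i ∈ Finset.univ,
            p i^2 ≤ q i^2 + (2*Nq + D) * (p i - q i) := by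
          intro i _
          have h1 : q i ≤ Nq := hqNq i
          have h2 : p i - q i ≤ D := hdle i
          have h3 : 0 ≤ p i - q i := sub_nonneg.2 (hqp i)
          nlinarith
        calc ∑ i, p i^2 ≤ ∑ i, (q i^2 + (2*Nq + D) * (p i - q i)) :=
              Finset.sum_le_sum pointwise
        _ = (∑ i, q i^2) + (2*Nq + D) * D := by
              rw [Finset.sum_add_distrib, ← Finset.mul_sum, Finset.sum_sub_distrib, ← hD_def]
        _ = (Nq + D)^2 := by rw [← hNq2]; ring
      calc Np ≤ Real.sqrt ((Nq + D)^2) := Real.sqrt_le_sqrt key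
      _ = Nq + D := Real.sqrt_sq (by positivity)
    -- (I3)
    have hpw2 : ∀ i ∈ Finset.univ, (q i - 1)^2 ≤ (u i + v i - 1)^2 := by
      intro i _
      have habs : u i + v i ≤ p i := by
        rw [hp_eq]; exact le_trans (le_abs_self _) (abs_add_le _ _)
      rcases le_or_gt (p i) 1 with h | h
      · rw [hq_eq, min_eq_left h]
        have h1 : 0 ≤ (p i - (u i + v i)) * (2 - (u i + v i) - p i) :=
          mul_nonneg (by linarith) (by linarith)
        nlinarith
      · rw [hq_eq, min_eq_right h.le]
        simpa using sq_nonneg (u i + v i - 1)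
    have hT2 : ∑ i, (q i - 1)^2 ≤ ∑ i, (u i + v i - 1)^2 := Finset.sum_le_sum hpw2
    -- scalars
    set r : ℝ := sm * t0 with hr_def
    have hr0 : 0 < r := mul_pos hsm0 ht0pos
    have h2r : lam < 2*r := by
      have he : 2*r = 2*sm - lam*sm + lam := by
        rw [hr_def, ht0_def]; field_simp
      nlinarith [mul_pos hsm0 (by linarith : (0:ℝ) < 2 - lam)]
    set mu : ℝ := lam/(2*r) with hmu_def
    have hmu0 : 0 < mu := by rw [hmu_def]; positivity
    have hmu1 : mu < 1 := by rw [hmu_def]; exact (div_lt_one (by positivity)).2 h2r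
    -- AM-GM for Nq
    have hAM : Nq ≤ ((∑ i, q i^2) + r^2)/(2*r) := by
      rw [le_div_iff₀ (by positivity)]
      nlinarith [sq_nonneg (Nq - r)]
    -- exact identity
    have hmut0 : mu * t0 = lam/(2*sm) := by
      rw [hmu_def, hr_def]; field_simp
    have hrel : t0 + (mu*t0)*sm - (mu*t0) = 1 := by
      rw [hmut0, ht0_def]; field_simp; ring
    have hb : lam = 2*(sm*t0)*mu := by
      rw [hmu_def, hr_def]; field_simp
    have hdiv : lam * (((∑ i, q i^2) + r^2)/(2*r)) = mu * ((∑ i, q i^2) + r^2) := by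
      rw [hmu_def, div_mul_eq_mul_div, mul_div_assoc]
    have hI : (∑ i, (q i - 1)^2) + lam * (∑ i, q i)
        - lam * (((∑ i, q i^2) + r^2)/(2*r))
        = gstar + (1 - mu) * (∑ i, (q i - t0)^2) := by
      rw [expand_sum_aux m q 1, expand_sum_aux m q t0, hg, hdiv, hr_def]
      linear_combination (∑ i, q i) * hb + (2*(∑ i, q i)) * hrel - (mu*t0^2) * hsm2
    -- main lower bound for reduced objective
    have hB1 : gstar + (1 - mu) * (∑ i, (q i - t0)^2)
        ≤ (∑ i, (q i - 1)^2) + lam * ((∑ i, q i) - Nq) := by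
      have h1 : lam * Nq ≤ lam * (((∑ i, q i^2) + r^2)/(2*r)) :=
        mul_le_mul_of_nonneg_left hAM hlam0.le
      have h2 : lam * ((∑ i, q i) - Nq) = lam * (∑ i, q i) - lam * Nq := by ring
      linarith only [hI, h1, h2]
    have hXY : (∑ i, q i) - Nq ≤ (∑ i, p i) - N := by linarith only [hNpNq, hNNp]
    have hlamXY : lam * ((∑ i, q i) - Nq) ≤ lam * ((∑ i, p i) - N) :=
      mul_le_mul_of_nonneg_left hXY hlam0.le
    have hW0 : 0 ≤ ∑ i, (q i - t0)^2 := Finset.sum_nonneg fun i _ => sq_nonneg _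
    have hS20 : 0 ≤ (∑ i, a i * (u i - v i))^2 := sq_nonneg _
    have hmuW : 0 ≤ (1 - mu) * (∑ i, (q i - t0)^2) :=
      mul_nonneg (by linarith) hW0
    -- extract equalities
    have hSzero : (∑ i, a i * (u i - v i)) = 0 := by
      have h : (∑ i, a i * (u i - v i))^2 ≤ 0 := by linarith only [hB1, hT2, hlamXY, heq, hmuW]
      exact pow_eq_zero_iff two_ne_zero |>.1 (le_antisymm h hS20)
    have hT2eq : ∑ i, (q i - 1)^2 = ∑ i, (u i + v i - 1)^2 := by
      have h : ∑ i, (u i + v i - 1)^2 ≤ ∑ i, (q i - 1)^2 := by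
        linarith only [hB1, hlamXY, heq, hmuW, hS20]
      exact le_antisymm hT2 h
    have hXYeq : (∑ i, p i) - N = (∑ i, q i) - Nq := by
      have h : lam * ((∑ i, p i) - N) ≤ lam * ((∑ i, q i) - Nq) := by
        linarith only [hB1, hT2, heq, hmuW, hS20]
      exact mul_left_cancel₀ hlam0.ne' (le_antisymm h hlamXY)
    have hWzero : ∑ i, (q i - t0)^2 = 0 := by
      have h : (1 - mu) * (∑ i, (q i - t0)^2) ≤ 0 := by
        linarith only [hB1, hT2, hlamXY, heq, hS20]
      have h2 : (1 - mu) * (∑ i, (q i - t0)^2) = 0 := le_antisymm h hmuW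
      rcases mul_eq_zero.1 h2 with h3 | h3
      · exact absurd h3 (by intro hh; linarith only [hh, hmu1])
      · exact h3
    -- per-coordinate consequences
    have hqt0 : ∀ i, q i = t0 := by
      intro i
      have h := (Finset.sum_eq_zero_iff_of_nonneg (fun j _ => sq_nonneg (q j - t0))).1 hWzero i
        (Finset.mem_univ i)
      have h2 := pow_eq_zero_iff two_ne_zero |>.1 h
      exact sub_eq_zero.1 h2
    have hNeqNp : N = Np := le_antisymm hNNp (by linarith only [hNpNq, hXYeq])
    have huv0 : ∀ i, u i = 0 ∨ v i = 0 := by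
      intro i
      have hsums : ∑ i, (u i ^2 + v i ^2) = ∑ i, p i ^2 := by
        have hN2 : N^2 = ∑ i, (u i ^2 + v i ^2) :=
          Real.sq_sqrt (Finset.sum_nonneg fun i _ => by positivity)
        rw [← hN2, ← hNp2, hNeqNp]
      have h := (Finset.sum_eq_sum_iff_of_le hpw1).1 hsums i (Finset.mem_univ i)
      have h3 : p i ^2 = u i^2 + v i^2 + 2*(|u i| * |v i|) := by
        rw [hp_eq, add_sq, sq_abs, sq_abs]; ring
      have h2 : |u i| * |v i| = 0 := by linarith only [h, h3]
      rcases mul_eq_zero.1 h2 with h | h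
      · exact Or.inl (abs_eq_zero.1 h)
      · exact Or.inr (abs_eq_zero.1 h)
    have hst0 : ∀ i, u i + v i = t0 := by
      intro i
      have hpq := (Finset.sum_eq_sum_iff_of_le hpw2).1 hT2eq i (Finset.mem_univ i)
      have habs : u i + v i ≤ p i := by
        rw [hp_eq]; exact le_trans (le_abs_self _) (abs_add_le _ _)
      rcases le_or_gt (p i) 1 with h | h
      · have hpt0 : p i = t0 := by rw [← min_eq_left h, ← hq_eq, hqt0 i]
        rw [hq_eq, min_eq_left h, hpt0] at hpq
        have hle : u i + v i ≤ t0 := by rw [hpt0] at habs; exact habs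
        have h2 : (t0 - (u i + v i)) * (2 - (u i + v i) - t0) = 0 := by
          linear_combination -hpq
        rcases mul_eq_zero.1 h2 with h3 | h3
        · linarith only [h3]
        · linarith only [h3, hle, ht0le1]
      · have hq1 : q i = 1 := by rw [hq_eq, min_eq_right h.le]
        have ht01 : t0 = 1 := by rw [← hqt0 i, hq1]
        rw [hq1] at hpq
        have h4 : (u i + v i - 1)^2 = 0 := by linarith only [hpq]
        have h5 := pow_eq_zero_iff two_ne_zero |>.1 h4
        rw [ht01]; exact sub_eq_zero.1 h5
    -- build ε
    refine ⟨fun i => if v i = 0 then 1 else -1,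
      fun i => by by_cases h : v i = 0 <;> simp [h], ?_⟩
    have hkey : ∀ i ∈ Finset.univ, (if v i = 0 then (1:ℝ) else -1) * a i
        = (a i * (u i - v i)) / t0 := by
      intro i _
      by_cases hv : v i = 0
      · rw [if_pos hv]
        have hu : u i = t0 := by have h := hst0 i; rw [hv] at h; linarith only [h]
        rw [hu, hv]
        field_simp; ring
      · rw [if_neg hv]
        have hu : u i = 0 := (huv0 i).resolve_right hv
        have hvv : v i = t0 := by have h := hst0 i; rw [hu] at h; linarith only [h]
        rw [hu, hvv]
        field_simp; ring
    rw [Finset.sum_congr rfl hkey, ← Finset.sum_div, hSzero]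
    simp
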